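/- Let f : ℝ^{m×n} → ℝ be convex and differentiable and let 𝒳* be the set of minimizers of f over the unit trace-norm ball. Then for every X* ∈ 𝒳*, rank(X*) ≤ #σ_1(∇f(X*)), the multiplicity of the largest singular value of ∇f(X*). Moreover, if ∇f(X*) ≠ 0 for every X* ∈ 𝒳*, then max{rank(X) : X ∈ 𝒳*} ≤ min{#σ_1(∇f(Y)) : Y ∈ 𝒳*}. -/

import Mathlib

/- Common definitions: Frobenius norm and inner product, singular values in
non-increasing order, trace (nuclear) norm, multiplicity of the top singular
value, Euclidean projection onto the trace-norm ball, the spectrahedron and its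
projection, sorted eigenvalues of symmetric matrices, best rank-`r`
approximations, and the singular-value soft-thresholding (prox) operator. -/

open scoped BigOperators
open Matrix MeasureTheory ProbabilityTheory

attribute [local instance] Matrix.normedAddCommGroup Matrix.normedSpace

noncomputable section

/-- Frobenius norm of a real matrix. -/
def frobNorm {m n : ℕ} (X : Matrix (Fin m) (Fin n) ℝ) : ℝ :=
  Real.sqrt (∑ i, ∑ j, (X i j) ^ 2)

/-- Frobenius inner product of two real matrices. -/
def frobInner {m n : ℕ} (A B : Matrix (Fin m) (Fin n) ℝ) : ℝ :=
  ∑ i, ∑ j, A i j * B i j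

/-- The continuous linear functional `H ↦ ⟨G, H⟩` (Frobenius inner product);
`HasFDerivAt f (frobCLM G) X` says that `G` is the gradient of `f` at `X`. -/
def frobCLM {m n : ℕ} (G : Matrix (Fin m) (Fin n) ℝ) :
    Matrix (Fin m) (Fin n) ℝ →L[ℝ] ℝ :=
  LinearMap.toContinuousLinearMap
    { toFun := fun H => frobInner G H
      map_add' := fun x y => by
        simp [frobInner, Matrix.add_apply, mul_add, Finset.sum_add_distrib]
      map_smul' := fun c x => by
        simp [frobInner, Matrix.smul_apply, smul_eq_mul, Finset.mul_sum, mul_left_comm] }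

/-- The non-increasing (descending) rearrangement of a finite tuple of reals. -/
def sortedDesc {N : ℕ} (f : Fin N → ℝ) : Fin N → ℝ :=
  fun i => f (Tuple.sort f i.rev)

/-- The singular values of a real `m × n` matrix in non-increasing order
(the square roots of the eigenvalues of `Xᵀ * X`), padded with zeros so that
there are `n` of them. -/
def svalsFin {m n : ℕ} (X : Matrix (Fin m) (Fin n) ℝ) : Fin n → ℝ :=
  sortedDesc (fun i => Real.sqrt ((show (Xᵀ * X).IsHermitian by
    simpa [Matrix.conjTranspose_eq_transpose_of_trivial] using
      Matrix.isHermitian_conjTranspose_mul_self X).eigenvalues i))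

/-- `svalI X i` is the `(i+1)`-th largest singular value of `X` (i.e. `0`-indexed:
`svalI X 0 = σ₁(X)`), interpreted as `0` when the index is out of range. -/
def svalI {m n : ℕ} (X : Matrix (Fin m) (Fin n) ℝ) (i : ℕ) : ℝ :=
  if h : i < n then svalsFin X ⟨i, h⟩ else 0

/-- The trace norm (nuclear norm): the sum of the singular values. -/
def traceNorm {m n : ℕ} (X : Matrix (Fin m) (Fin n) ℝ) : ℝ :=
  ∑ i, svalsFin X i

/-- `#σ₁(X)`: the multiplicity of the largest singular value of `X`. -/
def multTop {m n : ℕ} (X : Matrix (Fin m) (Fin n) ℝ) : ℕ :=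
  Nat.card {i : Fin n // svalsFin X i = svalI X 0}

/-- `P` is the Euclidean (Frobenius) projection of `X` onto the trace-norm ball
of radius `τ`. -/
def IsTraceBallProj {m n : ℕ} (τ : ℝ) (X P : Matrix (Fin m) (Fin n) ℝ) : Prop :=
  traceNorm P ≤ τ ∧ ∀ Z, traceNorm Z ≤ τ → frobNorm (X - P) ≤ frobNorm (X - Z)

/-- The Euclidean projection onto the trace-norm ball of radius `τ`. -/
def projTraceBall {m n : ℕ} (τ : ℝ) (X : Matrix (Fin m) (Fin n) ℝ) :
    Matrix (Fin m) (Fin n) ℝ :=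
  open scoped Classical in
  if h : ∃ P, IsTraceBallProj τ X P then h.choose else 0

/-- `Y` is a best rank-`r` approximation of `X` in Frobenius norm. -/
def IsBestRankApprox {m n : ℕ} (r : ℕ) (X Y : Matrix (Fin m) (Fin n) ℝ) : Prop :=
  Y.rank ≤ r ∧ ∀ Z : Matrix (Fin m) (Fin n) ℝ, Z.rank ≤ r → frobNorm (X - Y) ≤ frobNorm (X - Z)

/-- The spectrahedron: positive semidefinite matrices of unit trace. -/
def SpectraSet (n : ℕ) : Set (Matrix (Fin n) (Fin n) ℝ) :=
  {X | X.PosSemidef ∧ X.trace = 1}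

/-- `P` is the Euclidean (Frobenius) projection of `X` onto the spectrahedron. -/
def IsSpectraProj {n : ℕ} (X P : Matrix (Fin n) (Fin n) ℝ) : Prop :=
  P ∈ SpectraSet n ∧ ∀ Z ∈ SpectraSet n, frobNorm (X - P) ≤ frobNorm (X - Z)

/-- The Euclidean projection onto the spectrahedron. -/
def projSpectra {n : ℕ} (X : Matrix (Fin n) (Fin n) ℝ) : Matrix (Fin n) (Fin n) ℝ :=
  open scoped Classical in
  if h : ∃ P, IsSpectraProj X P then h.choose else 0

/-- `evalI X i` is the `(i+1)`-th largest eigenvalue of the symmetric matrix `X`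
(`0`-indexed: `evalI X 0 = λ₁(X)`, `evalI X (n-1) = λ_n(X)`); junk value `0` if
`X` is not symmetric or the index is out of range. -/
def evalI {n : ℕ} (X : Matrix (Fin n) (Fin n) ℝ) (i : ℕ) : ℝ :=
  open scoped Classical in
  if h : i < n then
    (if hX : X.IsHermitian then sortedDesc hX.eigenvalues ⟨i, h⟩ else 0)
  else 0

/-- The multiplicity of the smallest eigenvalue of a symmetric matrix. -/
def multMinEig {n : ℕ} (X : Matrix (Fin n) (Fin n) ℝ) : ℕ :=
  Nat.card {i : Fin n // evalI X i = evalI X (n - 1)}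

/-- `Y` is the value at `X` of the singular-value soft-thresholding operator
`𝒯_η`, characterized as the proximal mapping of `η‖·‖_*`:
the (unique) minimizer of `Z ↦ ½‖X − Z‖_F² + η‖Z‖_*`. -/
def IsSVT {m n : ℕ} (η : ℝ) (X Y : Matrix (Fin m) (Fin n) ℝ) : Prop :=
  ∀ Z : Matrix (Fin m) (Fin n) ℝ,
    frobNorm (X - Y) ^ 2 / 2 + η * traceNorm Y ≤ frobNorm (X - Z) ^ 2 / 2 + η * traceNorm Z

/-- The singular-value soft-thresholding operator `𝒯_η`. -/
def softThresh {m n : ℕ} (η : ℝ) (X : Matrix (Fin m) (Fin n) ℝ) :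
    Matrix (Fin m) (Fin n) ℝ :=
  open scoped Classical in
  if h : ∃ Y, IsSVT η X Y then h.choose else 0

instance {m n : ℕ} : MeasurableSpace (Matrix (Fin m) (Fin n) ℝ) :=
  inferInstanceAs (MeasurableSpace (Fin m → Fin n → ℝ))

end


/- ———————————————— auxiliary lemmas ———————————————— -/

noncomputable section helpersAux

lemma Matrix.isHermitian_transpose_mul_self {m n : ℕ} (X : Matrix (Fin m) (Fin n) ℝ) :
    (Xᴴ * X).IsHermitian :=
  Matrix.isHermitian_conjTranspose_mul_self X

lemma dot_mulVec_mulVec {a b c : ℕ} (A : Matrix (Fin a) (Fin b) ℝ)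
    (B : Matrix (Fin a) (Fin c) ℝ) (x : Fin b → ℝ) (y : Fin c → ℝ) :
    (A *ᵥ x) ⬝ᵥ (B *ᵥ y) = x ⬝ᵥ ((Aᵀ * B) *ᵥ y) := by
  conv_rhs => rw [← Matrix.mulVec_mulVec, Matrix.dotProduct_mulVec, Matrix.vecMul_transpose]

lemma frobInner_eq_trace {m n : ℕ} (A B : Matrix (Fin m) (Fin n) ℝ) :
    frobInner A B = Matrix.trace (Aᵀ * B) := by
  simp only [frobInner, Matrix.trace, Matrix.diag, Matrix.mul_apply, transpose_apply]
  rw [Finset.sum_comm]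

lemma frobInner_eq_sum_cols {m n : ℕ} (G A : Matrix (Fin m) (Fin n) ℝ)
    (U : Matrix (Fin n) (Fin n) ℝ) (hU : U * Uᵀ = 1) :
    frobInner G A = ∑ i, (G *ᵥ fun k => U k i) ⬝ᵥ (A *ᵥ fun k => U k i) := by
  have h : ∀ i, (G *ᵥ fun k => U k i) ⬝ᵥ (A *ᵥ fun k => U k i)
      = ∑ k, ∑ l, (Gᵀ*A) k l * (U k i * U l i) := by
    intro i
    rw [dot_mulVec_mulVec]
    simp only [dotProduct, mulVec, dotProduct, Finset.mul_sum]
    apply Finset.sum_congr rfl; intro k _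
    apply Finset.sum_congr rfl; intro l _
    ring
  simp only [h]
  rw [Finset.sum_comm]
  have h2 : ∀ k, ∑ i, ∑ l, (Gᵀ*A) k l * (U k i * U l i) = (Gᵀ*A) k k := by
    intro k
    rw [Finset.sum_comm]
    have hUU : ∀ k l, ∑ i, U k i * U l i = (1 : Matrix (Fin n) (Fin n) ℝ) k l := by
      intro k l
      rw [← hU]
      simp [Matrix.mul_apply]
    calc ∑ l, ∑ i, (Gᵀ*A) k l * (U k i * U l i)
        = ∑ l, (Gᵀ*A) k l * (1 : Matrix (Fin n) (Fin n) ℝ) k l := by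
          apply Finset.sum_congr rfl; intro l _
          rw [← Finset.mul_sum, hUU]
      _ = (Gᵀ*A) k k := by simp [Matrix.one_apply]
  simp only [h2]
  rw [frobInner_eq_trace]
  rfl

lemma dot_le_sqrt_mul_sqrt {k : ℕ} (p q : Fin k → ℝ) :
    p ⬝ᵥ q ≤ Real.sqrt (p ⬝ᵥ p) * Real.sqrt (q ⬝ᵥ q) := by
  have h := Real.sum_mul_le_sqrt_mul_sqrt Finset.univ p q
  simpa [dotProduct, pow_two] using h

lemma neg_sqrt_mul_sqrt_le_dot {k : ℕ} (p q : Fin k → ℝ) :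
    -(Real.sqrt (p ⬝ᵥ p) * Real.sqrt (q ⬝ᵥ q)) ≤ p ⬝ᵥ q := by
  have h := dot_le_sqrt_mul_sqrt (fun i => -(p i)) q
  have e1 : (fun i => -(p i)) ⬝ᵥ q = -(p ⬝ᵥ q) := by
    simp [dotProduct]
  have e2 : (fun i => -(p i)) ⬝ᵥ (fun i => -(p i)) = p ⬝ᵥ p := by
    simp [dotProduct]
  rw [e1, e2] at h
  linarith

lemma real_spectral {n : ℕ} (S : Matrix (Fin n) (Fin n) ℝ) (hS : S.IsHermitian) :
    ∃ U : Matrix (Fin n) (Fin n) ℝ, U * Uᵀ = 1 ∧ Uᵀ * U = 1 ∧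
      S = U * diagonal hS.eigenvalues * Uᵀ := by
  refine ⟨(Matrix.IsHermitian.eigenvectorUnitary hS : Matrix (Fin n) (Fin n) ℝ), ?_, ?_, ?_⟩
  · have h := (Matrix.mem_unitaryGroup_iff).mp (Matrix.IsHermitian.eigenvectorUnitary hS).2
    simpa [Matrix.star_eq_conjTranspose, Matrix.conjTranspose_eq_transpose_of_trivial] using h
  · have h := (Matrix.mem_unitaryGroup_iff').mp (Matrix.IsHermitian.eigenvectorUnitary hS).2
    simpa [Matrix.star_eq_conjTranspose, Matrix.conjTranspose_eq_transpose_of_trivial] using h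
  · have h := Matrix.IsHermitian.spectral_theorem hS
    simpa [Matrix.star_eq_conjTranspose, Matrix.conjTranspose_eq_transpose_of_trivial,
      RCLike.ofReal_real_eq_id] using h

lemma col_eigen {n : ℕ} (S U : Matrix (Fin n) (Fin n) ℝ) (e : Fin n → ℝ)
    (hUtU : Uᵀ * U = 1) (hspec : S = U * diagonal e * Uᵀ) (i : Fin n) :
    S *ᵥ (fun k => U k i) = e i • (fun k => U k i) := by
  have hSU : S * U = U * diagonal e := by
    rw [hspec, mul_assoc, hUtU, mul_one]
  funext k
  have h1 : (S *ᵥ fun k => U k i) k = (S * U) k i := by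
    simp [mulVec, dotProduct, Matrix.mul_apply]
  rw [h1, hSU, Matrix.mul_diagonal]
  simp [mul_comm]

lemma diag_mulVec {n : ℕ} (e : Fin n → ℝ) (c : Fin n → ℝ) :
    (diagonal e) *ᵥ c = fun j => e j * c j := by
  funext j
  simp [mulVec, dotProduct, diagonal]

lemma quad_form_eq {n : ℕ} (S U : Matrix (Fin n) (Fin n) ℝ) (e : Fin n → ℝ)
    (hspec : S = U * diagonal e * Uᵀ) (x : Fin n → ℝ) :
    x ⬝ᵥ (S *ᵥ x) = ∑ j, e j * ((Uᵀ *ᵥ x) j)^2 := by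
  rw [hspec]
  rw [← Matrix.mulVec_mulVec, ← Matrix.mulVec_mulVec]
  rw [Matrix.dotProduct_mulVec, ← Matrix.mulVec_transpose]
  rw [diag_mulVec]
  simp only [dotProduct]
  apply Finset.sum_congr rfl; intro j _
  ring

lemma coords_norm {n : ℕ} (U : Matrix (Fin n) (Fin n) ℝ) (hU : U * Uᵀ = 1) (x : Fin n → ℝ) :
    ∑ j, ((Uᵀ *ᵥ x) j)^2 = x ⬝ᵥ x := by
  have h : (Uᵀ *ᵥ x) ⬝ᵥ (Uᵀ *ᵥ x) = x ⬝ᵥ ((Uᵀᵀ * Uᵀ) *ᵥ x) := dot_mulVec_mulVec _ _ _ _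
  rw [Matrix.transpose_transpose, hU] at h
  simp only [Matrix.one_mulVec] at h
  rw [← h]
  simp [dotProduct, pow_two]

lemma trace_conj {n : ℕ} (U M : Matrix (Fin n) (Fin n) ℝ) (hUtU : Uᵀ * U = 1) :
    Matrix.trace (U * M * Uᵀ) = Matrix.trace M := by
  rw [Matrix.trace_mul_comm (U * M) Uᵀ, ← mul_assoc, hUtU, one_mul]

lemma sortedDesc_comp {N : ℕ} (f : Fin N → ℝ) :
    ∃ e : Fin N ≃ Fin N, (∀ i, sortedDesc f i = f (e i)) ∧
      (∀ j i0, f j ≤ sortedDesc f i0 ∨ i0.val ≠ 0) := by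
  refine ⟨Fin.revPerm.trans (Tuple.sort f), fun i => rfl, ?_⟩
  intro j i0
  by_cases h0 : i0.val = 0
  · left
    have hmono := Tuple.monotone_sort f
    have hrev : ∀ i : Fin N, i ≤ i0.rev := by
      intro i
      rw [Fin.le_def, Fin.val_rev]
      have h2 := i.isLt
      omega
    have : f ((Tuple.sort f) ((Tuple.sort f).symm j)) ≤ f ((Tuple.sort f) i0.rev) :=
      hmono (hrev _)
    simpa [sortedDesc] using this
  · right; exact h0

lemma traceNorm_eq_sum_sqrt {m n : ℕ} (X : Matrix (Fin m) (Fin n) ℝ) :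
    traceNorm X = ∑ j, Real.sqrt ((Matrix.isHermitian_transpose_mul_self X).eigenvalues j) := by
  obtain ⟨e, he, -⟩ := sortedDesc_comp
    (fun i => Real.sqrt ((Matrix.isHermitian_transpose_mul_self X).eigenvalues i))
  calc traceNorm X = ∑ i, Real.sqrt
        ((Matrix.isHermitian_transpose_mul_self X).eigenvalues (e i)) := by
        apply Finset.sum_congr rfl; intro i _; exact he i
    _ = _ := Equiv.sum_comp e
        (fun j => Real.sqrt ((Matrix.isHermitian_transpose_mul_self X).eigenvalues j))

lemma traceNorm_nonneg' {m n : ℕ} (X : Matrix (Fin m) (Fin n) ℝ) : 0 ≤ traceNorm X := by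
  rw [traceNorm_eq_sum_sqrt]
  exact Finset.sum_nonneg fun _ _ => Real.sqrt_nonneg _

lemma frobInner_add_right' {m n : ℕ} (G A B : Matrix (Fin m) (Fin n) ℝ) :
    frobInner G (A + B) = frobInner G A + frobInner G B := by
  simp [frobInner, Matrix.add_apply, mul_add, Finset.sum_add_distrib]

lemma frobInner_smul_right' {m n : ℕ} (G : Matrix (Fin m) (Fin n) ℝ) (t : ℝ)
    (A : Matrix (Fin m) (Fin n) ℝ) : frobInner G (t • A) = t * frobInner G A := by
  simp [frobInner, Matrix.smul_apply, smul_eq_mul, Finset.mul_sum, mul_left_comm]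

lemma eig_tmulself_nonneg {m n : ℕ} (X : Matrix (Fin m) (Fin n) ℝ) (j : Fin n) :
    0 ≤ (Matrix.isHermitian_transpose_mul_self X).eigenvalues j := by
  have h : (Xᴴ * X).PosSemidef := Matrix.posSemidef_conjTranspose_mul_self X
  exact h.eigenvalues_nonneg j

lemma frobInner_le_traceNorm {m n : ℕ} (Q A : Matrix (Fin m) (Fin n) ℝ)
    (hQ : ∀ v : Fin n → ℝ, (Q *ᵥ v) ⬝ᵥ (Q *ᵥ v) ≤ v ⬝ᵥ v) :
    frobInner Q A ≤ traceNorm A := by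
  have hX := Matrix.isHermitian_transpose_mul_self A
  set μ := hX.eigenvalues with hμ
  obtain ⟨U, hU, hUtU, hspec0⟩ := real_spectral _ hX
  have hspec : Aᵀ * A = U * diagonal hX.eigenvalues * Uᵀ := by
    rw [← Matrix.conjTranspose_eq_transpose_of_trivial A]; exact hspec0
  rw [frobInner_eq_sum_cols Q A U hU, traceNorm_eq_sum_sqrt]
  apply Finset.sum_le_sum
  intro i _
  set v : Fin n → ℝ := fun k => U k i with hv
  have hvv : v ⬝ᵥ v = 1 := by
    have h3 : v ⬝ᵥ v = (Uᵀ * U) i i := by simp [hv, dotProduct, Matrix.mul_apply]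
    rw [h3, hUtU]; simp
  have hAv : (A *ᵥ v) ⬝ᵥ (A *ᵥ v) = μ i := by
    rw [dot_mulVec_mulVec, col_eigen _ U μ hUtU hspec i]
    simp only [dotProduct, Pi.smul_apply, smul_eq_mul]
    have h4 : ∑ k, v k * (μ i * v k) = μ i * (v ⬝ᵥ v) := by
      rw [dotProduct, Finset.mul_sum]; apply Finset.sum_congr rfl; intros; ring
    rw [h4, hvv, mul_one]
  have hQv : (Q *ᵥ v) ⬝ᵥ (Q *ᵥ v) ≤ 1 := by rw [← hvv]; exact hQ v
  calc (Q *ᵥ v) ⬝ᵥ (A *ᵥ v)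
      ≤ Real.sqrt ((Q *ᵥ v) ⬝ᵥ (Q *ᵥ v)) * Real.sqrt ((A *ᵥ v) ⬝ᵥ (A *ᵥ v)) :=
        dot_le_sqrt_mul_sqrt _ _
    _ ≤ 1 * Real.sqrt (μ i) := by
        apply mul_le_mul
        · calc Real.sqrt ((Q *ᵥ v) ⬝ᵥ (Q *ᵥ v)) ≤ Real.sqrt 1 := Real.sqrt_le_sqrt hQv
            _ = 1 := Real.sqrt_one
        · rw [hAv]
        · exact Real.sqrt_nonneg _
        · norm_num
    _ = Real.sqrt (μ i) := one_mul _

lemma conj_diag_mul {n : ℕ} (U : Matrix (Fin n) (Fin n) ℝ) (hUtU : Uᵀ * U = 1)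
    (e f : Fin n → ℝ) :
    (U * diagonal e * Uᵀ) * (U * diagonal f * Uᵀ)
      = U * diagonal (fun j => e j * f j) * Uᵀ := by
  have hd : diagonal e * diagonal f = diagonal (fun j => e j * f j) := by
    rw [Matrix.diagonal_mul_diagonal]
  calc (U * diagonal e * Uᵀ) * (U * diagonal f * Uᵀ)
      = U * (diagonal e * ((Uᵀ * U) * (diagonal f * Uᵀ))) := by
        simp only [mul_assoc]
    _ = U * ((diagonal e * diagonal f) * Uᵀ) := by
        rw [hUtU, one_mul, ← Matrix.mul_assoc (diagonal e) (diagonal f) Uᵀ]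
    _ = U * diagonal (fun j => e j * f j) * Uᵀ := by rw [hd, mul_assoc]

lemma exists_dual {m n : ℕ} (A : Matrix (Fin m) (Fin n) ℝ) :
    ∃ Q : Matrix (Fin m) (Fin n) ℝ, (∀ v, (Q *ᵥ v) ⬝ᵥ (Q *ᵥ v) ≤ v ⬝ᵥ v) ∧
      frobInner Q A = traceNorm A := by
  classical
  have hX := Matrix.isHermitian_transpose_mul_self A
  set μ := hX.eigenvalues with hμ
  obtain ⟨U, hU, hUtU, hspec0⟩ := real_spectral _ hX
  have hspec : Aᵀ * A = U * diagonal μ * Uᵀ := by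
    rw [← Matrix.conjTranspose_eq_transpose_of_trivial A]; exact hspec0
  set d : Fin n → ℝ := fun j => if μ j = 0 then 0 else (Real.sqrt (μ j))⁻¹ with hd
  set P : Matrix (Fin n) (Fin n) ℝ := U * diagonal d * Uᵀ with hP
  have hPt : Pᵀ = P := by
    rw [hP, Matrix.transpose_mul, Matrix.transpose_mul, Matrix.transpose_transpose,
      Matrix.diagonal_transpose, mul_assoc]
  have hμnn : ∀ j, 0 ≤ μ j := fun j => eig_tmulself_nonneg A j
  have hQQ : (A * P)ᵀ * (A * P) = U * diagonal (fun j => (d j * μ j) * d j) * Uᵀ := by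
    have h1 : (A * P)ᵀ * (A * P) = P * ((Aᵀ * A) * P) := by
      rw [Matrix.transpose_mul, hPt]
      simp only [Matrix.mul_assoc]
    rw [h1, hspec, hP]
    rw [← mul_assoc (U * diagonal d * Uᵀ), conj_diag_mul U hUtU d μ, conj_diag_mul U hUtU _ d]
  refine ⟨A * P, ?_, ?_⟩
  · intro v
    have h2 : ((A * P) *ᵥ v) ⬝ᵥ ((A * P) *ᵥ v) = v ⬝ᵥ (((A * P)ᵀ * (A * P)) *ᵥ v) :=
      dot_mulVec_mulVec _ _ _ _
    rw [h2, hQQ, quad_form_eq _ U _ rfl v]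
    calc ∑ j, (d j * μ j) * d j * ((Uᵀ *ᵥ v) j)^2
        ≤ ∑ j, ((Uᵀ *ᵥ v) j)^2 := by
          apply Finset.sum_le_sum
          intro j _
          have hle : (d j * μ j) * d j ≤ 1 := by
            by_cases hz : μ j = 0
            · simp [hd, hz]
            · have hsq : Real.sqrt (μ j) * Real.sqrt (μ j) = μ j :=
                Real.mul_self_sqrt (hμnn j)
              have hsne : Real.sqrt (μ j) ≠ 0 := by
                intro h0
                exact hz (by rw [← hsq, h0, mul_zero])
              have heq : (d j * μ j) * d j = 1 := by
                simp only [hd, if_neg hz]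
                field_simp
                rw [sq, hsq]
              rw [heq]
          nlinarith [sq_nonneg ((Uᵀ *ᵥ v) j), hle]
      _ = v ⬝ᵥ v := coords_norm U hU v
  · rw [frobInner_eq_trace]
    have h3 : (A * P)ᵀ * A = P * (Aᵀ * A) := by
      rw [Matrix.transpose_mul, hPt]
      simp only [Matrix.mul_assoc]
    rw [h3, hspec, hP, conj_diag_mul U hUtU d μ, trace_conj U _ hUtU, Matrix.trace_diagonal]
    rw [traceNorm_eq_sum_sqrt]
    apply Finset.sum_congr rfl
    intro j _
    by_cases hz : μ j = 0
    · simp only [hd, if_pos hz, zero_mul]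
      rw [← hμ, hz, Real.sqrt_zero]
    · have hsq : Real.sqrt (μ j) * Real.sqrt (μ j) = μ j := Real.mul_self_sqrt (hμnn j)
      have hsne : Real.sqrt (μ j) ≠ 0 := by
        intro h0
        exact hz (by rw [← hsq, h0, mul_zero])
      simp only [hd, if_neg hz]
      rw [← hμ]
      field_simp
      rw [sq, hsq]

lemma traceNorm_combo_le {m n : ℕ} (X Z : Matrix (Fin m) (Fin n) ℝ) (t : ℝ)
    (h0 : 0 ≤ t) (h1 : t ≤ 1) (hX : traceNorm X ≤ 1) (hZ : traceNorm Z ≤ 1) :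
    traceNorm (X + t • (Z - X)) ≤ 1 := by
  obtain ⟨Q, hQc, hQv⟩ := exists_dual (X + t • (Z - X))
  have hXZ : X + t • (Z - X) = (1-t) • X + t • Z := by
    ext i j
    simp [Matrix.add_apply, Matrix.smul_apply, Matrix.sub_apply, smul_eq_mul]
    ring
  have b1 : frobInner Q X ≤ traceNorm X := frobInner_le_traceNorm Q X hQc
  have b2 : frobInner Q Z ≤ traceNorm Z := frobInner_le_traceNorm Q Z hQc
  have hval : traceNorm (X + t • (Z - X))
      = (1-t) * frobInner Q X + t * frobInner Q Z := by
    rw [← hQv]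
    conv_lhs => rw [hXZ]
    rw [frobInner_add_right', frobInner_smul_right', frobInner_smul_right']
  rw [hval]
  nlinarith [traceNorm_nonneg' X, traceNorm_nonneg' Z]

lemma combo_eq {m n : ℕ} (X Z : Matrix (Fin m) (Fin n) ℝ) (t : ℝ) :
    X + t • (Z - X) = (1-t) • X + t • Z := by
  ext i j
  simp [Matrix.add_apply, Matrix.smul_apply, Matrix.sub_apply, smul_eq_mul]
  ring

lemma frobCLM_apply {m n : ℕ} (G H : Matrix (Fin m) (Fin n) ℝ) :
    frobCLM G H = frobInner G H := rfl

lemma hasDerivAt_path {m n : ℕ} (f : Matrix (Fin m) (Fin n) ℝ → ℝ)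
    (gradf : Matrix (Fin m) (Fin n) ℝ → Matrix (Fin m) (Fin n) ℝ)
    (hdiff : ∀ X, HasFDerivAt f (frobCLM (gradf X)) X)
    (X D : Matrix (Fin m) (Fin n) ℝ) :
    HasDerivAt (fun t : ℝ => f (X + t • D)) (frobInner (gradf X) D) 0 := by
  have hγ : HasDerivAt (fun t : ℝ => X + t • D) D 0 := by
    have h1 : HasDerivAt (fun t : ℝ => t • D) ((1:ℝ) • D) 0 :=
      (hasDerivAt_id (0:ℝ)).smul_const D
    have h3 := h1.const_add X
    rwa [one_smul] at h3
  have hf : HasFDerivAt f (frobCLM (gradf X)) ((fun t : ℝ => X + t • D) 0) := by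
    simpa using hdiff X
  have h2 := hf.comp_hasDerivAt 0 hγ
  rw [← frobCLM_apply]
  exact h2

lemma deriv_nonneg_of_min (φ : ℝ → ℝ) (d : ℝ) (hφ : HasDerivAt φ d 0)
    (hmin : ∀ t : ℝ, 0 < t → t ≤ 1 → φ 0 ≤ φ t) : 0 ≤ d := by
  have hslope := hasDerivAt_iff_tendsto_slope.mp hφ
  have hsub : Set.Ioi (0:ℝ) ⊆ {(0:ℝ)}ᶜ := fun x hx => ne_of_gt hx
  have hT : Filter.Tendsto (slope φ 0) (nhdsWithin 0 (Set.Ioi 0)) (nhds d) :=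
    hslope.mono_left (nhdsWithin_mono 0 hsub)
  refine ge_of_tendsto hT ?_
  filter_upwards [Ioc_mem_nhdsGT_of_mem (by constructor <;> norm_num : (0:ℝ) ∈ Set.Ico (0:ℝ) 1)]
    with t ht
  rw [slope_def_field]
  rw [div_eq_mul_inv]
  apply mul_nonneg
  · have := hmin t ht.1 ht.2
    linarith
  · simp
    linarith [ht.1]

lemma deriv_le_slope_bound (φ : ℝ → ℝ) (d C : ℝ) (hφ : HasDerivAt φ d 0)
    (hub : ∀ t : ℝ, 0 < t → t ≤ 1 → φ t ≤ φ 0 + t * C) : d ≤ C := by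
  have hslope := hasDerivAt_iff_tendsto_slope.mp hφ
  have hsub : Set.Ioi (0:ℝ) ⊆ {(0:ℝ)}ᶜ := fun x hx => ne_of_gt hx
  have hT : Filter.Tendsto (slope φ 0) (nhdsWithin 0 (Set.Ioi 0)) (nhds d) :=
    hslope.mono_left (nhdsWithin_mono 0 hsub)
  refine le_of_tendsto hT ?_
  filter_upwards [Ioc_mem_nhdsGT_of_mem (by constructor <;> norm_num : (0:ℝ) ∈ Set.Ico (0:ℝ) 1)]
    with t ht
  rw [slope_def_field, sub_zero, div_le_iff₀ ht.1]
  have := hub t ht.1 ht.2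
  linarith [this]

lemma opt_lin {m n : ℕ} (f : Matrix (Fin m) (Fin n) ℝ → ℝ)
    (gradf : Matrix (Fin m) (Fin n) ℝ → Matrix (Fin m) (Fin n) ℝ)
    (hdiff : ∀ X, HasFDerivAt f (frobCLM (gradf X)) X)
    (Xs : Matrix (Fin m) (Fin n) ℝ) (hXs : traceNorm Xs ≤ 1)
    (hmin : ∀ Z, traceNorm Z ≤ 1 → f Xs ≤ f Z)
    (Z : Matrix (Fin m) (Fin n) ℝ) (hZ : traceNorm Z ≤ 1) :
    0 ≤ frobInner (gradf Xs) (Z - Xs) := by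
  apply deriv_nonneg_of_min _ _ (hasDerivAt_path f gradf hdiff Xs (Z - Xs))
  intro t ht0 ht1
  have h := hmin _ (traceNorm_combo_le Xs Z t ht0.le ht1 hXs hZ)
  simpa using h

lemma grad_ineq {m n : ℕ} (f : Matrix (Fin m) (Fin n) ℝ → ℝ)
    (gradf : Matrix (Fin m) (Fin n) ℝ → Matrix (Fin m) (Fin n) ℝ)
    (hconv : ConvexOn ℝ Set.univ f)
    (hdiff : ∀ X, HasFDerivAt f (frobCLM (gradf X)) X)
    (X Y : Matrix (Fin m) (Fin n) ℝ) :
    frobInner (gradf X) (Y - X) ≤ f Y - f X := by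
  apply deriv_le_slope_bound _ _ _ (hasDerivAt_path f gradf hdiff X (Y - X))
  intro t ht0 ht1
  have h := hconv.2 (Set.mem_univ X) (Set.mem_univ Y)
    (by linarith : (0:ℝ) ≤ 1 - t) ht0.le (by ring)
  simp only [zero_smul, add_zero]
  rw [combo_eq X Y t]
  have h2 : f ((1-t) • X + t • Y) ≤ (1-t) * f X + t * f Y := by
    simpa [smul_eq_mul] using h
  linarith

lemma traceNorm_unit_vecMulVec {m n : ℕ} (a : Fin m → ℝ) (b : Fin n → ℝ)
    (haa : a ⬝ᵥ a = 1) (hbb : b ⬝ᵥ b = 1) : traceNorm (vecMulVec a b) ≤ 1 := by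
  classical
  set Z := vecMulVec a b with hZ
  have hZh := Matrix.isHermitian_transpose_mul_self Z
  set η := hZh.eigenvalues with hη
  have hZtZ : Zᵀ * Z = vecMulVec b b := by
    ext i j
    have h1 : (Zᵀ * Z) i j = ∑ k, (a k * b i) * (a k * b j) := by
      simp [hZ, Matrix.mul_apply, Matrix.vecMulVec_apply]
      exact Finset.sum_congr rfl fun _ _ => by ring
    rw [h1]
    have h2 : ∑ k, (a k * b i) * (a k * b j) = (a ⬝ᵥ a) * (b i * b j) := by
      rw [dotProduct, Finset.sum_mul]
      apply Finset.sum_congr rfl; intros; ring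
    rw [h2, haa, one_mul, Matrix.vecMulVec_apply]
  have hMh : Zᴴ * Z = vecMulVec b b := by
    rw [Matrix.conjTranspose_eq_transpose_of_trivial]; exact hZtZ
  have hMM : (Zᴴ * Z) * (Zᴴ * Z) = Zᴴ * Z := by
    rw [hMh]
    ext i j
    have h1 : (vecMulVec b b * vecMulVec b b) i j = ∑ k, (b i * b k) * (b k * b j) := by
      simp [Matrix.mul_apply, Matrix.vecMulVec_apply]
    rw [h1, Matrix.vecMulVec_apply]
    have h2 : ∑ k, (b i * b k) * (b k * b j) = (b ⬝ᵥ b) * (b i * b j) := by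
      rw [dotProduct, Finset.sum_mul]
      apply Finset.sum_congr rfl; intros; ring
    rw [h2, hbb, one_mul]
  obtain ⟨W, hW, hWtW, hspec0⟩ := real_spectral _ hZh
  have hηsq : ∀ l, η l * η l = η l := by
    intro l
    have hcol := col_eigen _ W η hWtW hspec0 l
    have hcol2 : (Zᴴ * Z) *ᵥ ((Zᴴ * Z) *ᵥ (fun k => W k l)) = (η l * η l) • (fun k => W k l) := by
      rw [hcol, Matrix.mulVec_smul, hcol, smul_smul]
    have hcol3 : (Zᴴ * Z) *ᵥ ((Zᴴ * Z) *ᵥ (fun k => W k l)) = η l • (fun k => W k l) := by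
      rw [Matrix.mulVec_mulVec, hMM, hcol]
    have hne : (fun k => W k l) ≠ 0 := by
      intro h0
      have hd : (fun k => W k l) ⬝ᵥ (fun k => W k l) = (Wᵀ * W) l l := by
        simp [dotProduct, Matrix.mul_apply]
      rw [hWtW, h0] at hd
      simp [Matrix.one_apply] at hd
    have := hcol2.symm.trans hcol3
    by_contra hne2
    have : (η l * η l - η l) • (fun k => W k l) = 0 := by
      rw [sub_smul, this, sub_self]
    rcases smul_eq_zero.mp this with h | h
    · exact hne2 (by linarith [sub_eq_zero.mp (by linarith [h] : η l * η l - η l = 0)])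
    · exact hne h
  have hsqrt : ∀ l, Real.sqrt (η l) = η l := by
    intro l
    have hfact : η l * (η l - 1) = 0 := by
      have h := hηsq l
      ring_nf
      linarith
    rcases mul_eq_zero.mp hfact with h | h
    · rw [h, Real.sqrt_zero]
    · rw [sub_eq_zero] at h
      rw [h, Real.sqrt_one]
  have htrace : ∑ l, η l = 1 := by
    have h1 : Matrix.trace (Zᴴ * Z) = ∑ l, η l := by
      rw [hspec0, trace_conj W _ hWtW, Matrix.trace_diagonal]
    have h2 : Matrix.trace (Zᴴ * Z) = 1 := by
      rw [hMh]
      have : Matrix.trace (vecMulVec b b) = ∑ i, b i * b i := by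
        simp [Matrix.trace, Matrix.diag, Matrix.vecMulVec_apply]
      rw [this, ← dotProduct, hbb]
    rw [← h1, h2]
  rw [traceNorm_eq_sum_sqrt]
  have hcalc : ∑ j, Real.sqrt ((Matrix.isHermitian_transpose_mul_self Z).eigenvalues j)
      = ∑ l, η l := by
    apply Finset.sum_congr rfl
    intro l _
    rw [← hη]
    exact hsqrt l
  rw [hcalc, htrace]

lemma dot_self_nonneg' {k : ℕ} (p : Fin k → ℝ) : 0 ≤ p ⬝ᵥ p :=
  Finset.sum_nonneg fun i _ => mul_self_nonneg (p i)

set_option maxHeartbeats 2000000 in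
lemma key_rank_le {m n : ℕ} (G X : Matrix (Fin m) (Fin n) ℝ)
    (htr : traceNorm X ≤ 1)
    (hlin : ∀ Z, traceNorm Z ≤ 1 → frobInner G X ≤ frobInner G Z) :
    X.rank ≤ multTop G := by
  classical
  rcases Nat.eq_zero_or_pos n with hn | hn
  · subst hn
    have h : X.rank ≤ 0 := by simpa using Matrix.rank_le_card_width X
    omega
  have hG := Matrix.isHermitian_transpose_mul_self G
  obtain ⟨V, hV, hVtV, hGspec0⟩ := real_spectral _ hG
  have hGspec : Gᵀ * G = V * diagonal hG.eigenvalues * Vᵀ := by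
    rw [← Matrix.conjTranspose_eq_transpose_of_trivial G]; exact hGspec0
  have hνnn : ∀ j, 0 ≤ hG.eigenvalues j := fun j => eig_tmulself_nonneg G j
  obtain ⟨eG, heG, hmaxG⟩ := sortedDesc_comp (fun j => Real.sqrt (hG.eigenvalues j))
  have hsvG : ∀ i, svalsFin G i = Real.sqrt (hG.eigenvalues (eG i)) := fun i => heG i
  set i0 : Fin n := ⟨0, hn⟩ with hi0
  have hσdef : svalI G 0 = svalsFin G i0 := by
    unfold svalI
    rw [dif_pos hn]
  set σ := svalI G 0 with hσs
  set j0 := eG i0 with hj0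
  have hσ : σ = Real.sqrt (hG.eigenvalues j0) := by rw [hσdef, hsvG i0]
  have hmax : ∀ j, Real.sqrt (hG.eigenvalues j) ≤ σ := by
    intro j
    rcases hmaxG j i0 with h | h
    · rw [hσdef]; exact h
    · exact absurd rfl h
  have hσnn : 0 ≤ σ := by rw [hσ]; exact Real.sqrt_nonneg _
  have hν_le : ∀ j, hG.eigenvalues j ≤ hG.eigenvalues j0 := by
    intro j
    have h1 := hmax j
    rw [hσ] at h1
    nlinarith [Real.sq_sqrt (hνnn j), Real.sq_sqrt (hνnn j0), Real.sqrt_nonneg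
      (hG.eigenvalues j), Real.sqrt_nonneg (hG.eigenvalues j0)]
  have hσ2 : σ^2 = hG.eigenvalues j0 := by rw [hσ]; exact Real.sq_sqrt (hνnn j0)
  have hmult : multTop G = Nat.card {j : Fin n // hG.eigenvalues j = hG.eigenvalues j0} := by
    have hiff : ∀ i : Fin n, svalsFin G i = svalI G 0 ↔
        hG.eigenvalues (eG i) = hG.eigenvalues j0 := by
      intro i
      rw [hsvG i, ← hσs, hσ]
      constructor
      · intro h
        nlinarith [Real.sq_sqrt (hνnn (eG i)), Real.sq_sqrt (hνnn j0)]
      · intro h; rw [h]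
    unfold multTop
    exact Nat.card_congr (Equiv.subtypeEquiv eG (fun i => hiff i))
  have hX := Matrix.isHermitian_transpose_mul_self X
  obtain ⟨U, hU, hUtU, hXspec0⟩ := real_spectral _ hX
  have hXspec : Xᵀ * X = U * diagonal hX.eigenvalues * Uᵀ := by
    rw [← Matrix.conjTranspose_eq_transpose_of_trivial X]; exact hXspec0
  have hμnn : ∀ i, 0 ≤ hX.eigenvalues i := fun i => eig_tmulself_nonneg X i
  have hrank : X.rank = Nat.card {i : Fin n // hX.eigenvalues i ≠ 0} := by
    have h1 := hX.rank_eq_card_non_zero_eigs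
    have h2 : (Xᴴ * X).rank = X.rank := by
      rw [Matrix.conjTranspose_eq_transpose_of_trivial]
      exact Matrix.rank_transpose_mul_self X
    rw [← h2, h1, Nat.card_eq_fintype_card]
  rcases eq_or_lt_of_le hσnn with hσ0 | hσpos
  · -- top singular value of G is zero
    have hall : ∀ i, svalsFin G i = svalI G 0 := by
      intro i
      have h1 := hmax (eG i)
      have h2 : 0 ≤ Real.sqrt (hG.eigenvalues (eG i)) := Real.sqrt_nonneg _
      rw [hsvG i, ← hσs]
      linarith
    have hcard : multTop G = n := by
      unfold multTop
      rw [Nat.card_congr (Equiv.subtypeUnivEquiv hall), Nat.card_eq_fintype_card,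
        Fintype.card_fin]
    rw [hcard]
    have := Matrix.rank_le_card_width X
    simpa using this
  · -- positive top singular value
    have hσne : σ ≠ 0 := ne_of_gt hσpos
    set b : Fin n → ℝ := fun k => V k j0 with hb
    have hbb : b ⬝ᵥ b = 1 := by
      have h1 : b ⬝ᵥ b = (Vᵀ * V) j0 j0 := by simp [hb, dotProduct, Matrix.mul_apply]
      rw [h1, hVtV, Matrix.one_apply_eq]
    have hGtGb : (Gᵀ * G) *ᵥ b = hG.eigenvalues j0 • b :=
      col_eigen _ V _ hVtV hGspec j0
    have hGb2 : (G *ᵥ b) ⬝ᵥ (G *ᵥ b) = hG.eigenvalues j0 := by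
      rw [dot_mulVec_mulVec, hGtGb]
      have h1 : b ⬝ᵥ (hG.eigenvalues j0 • b) = hG.eigenvalues j0 * (b ⬝ᵥ b) := by
        simp only [dotProduct, Pi.smul_apply, smul_eq_mul, Finset.mul_sum]
        apply Finset.sum_congr rfl; intros; ring
      rw [h1, hbb, mul_one]
    set a : Fin m → ℝ := fun p => (-(σ⁻¹)) * (G *ᵥ b) p with ha
    have haa : a ⬝ᵥ a = 1 := by
      have h1 : a ⬝ᵥ a = (σ⁻¹ * σ⁻¹) * ((G *ᵥ b) ⬝ᵥ (G *ᵥ b)) := by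
        simp only [ha, dotProduct, Finset.mul_sum]
        apply Finset.sum_congr rfl; intros; ring
      rw [h1, hGb2, ← hσ2]
      field_simp
    set Z0 := vecMulVec a b with hZ0
    have hZval : frobInner G Z0 = -σ := by
      have h1 : frobInner G Z0 = a ⬝ᵥ (G *ᵥ b) := by
        calc frobInner G Z0 = ∑ p, ∑ q, G p q * (a p * b q) := by
              simp [frobInner, hZ0, Matrix.vecMulVec_apply]
          _ = ∑ p, a p * (∑ q, G p q * b q) := by
              apply Finset.sum_congr rfl; intro p _
              rw [Finset.mul_sum]
              apply Finset.sum_congr rfl; intros; ring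
          _ = a ⬝ᵥ (G *ᵥ b) := by simp [dotProduct, mulVec]
      have h2 : a ⬝ᵥ (G *ᵥ b) = (-(σ⁻¹)) * ((G *ᵥ b) ⬝ᵥ (G *ᵥ b)) := by
        simp only [ha, dotProduct, Finset.mul_sum]
        apply Finset.sum_congr rfl; intros; ring
      rw [h1, h2, hGb2, ← hσ2]
      field_simp
    have hZtr : traceNorm Z0 ≤ 1 := traceNorm_unit_vecMulVec a b haa hbb
    -- columns of U
    set colU : Fin n → (Fin n → ℝ) := fun i k => U k i with hcolU
    have hcol_dot : ∀ i i', colU i ⬝ᵥ colU i' = (1 : Matrix (Fin n) (Fin n) ℝ) i i' := by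
      intro i i'
      have h1 : colU i ⬝ᵥ colU i' = (Uᵀ * U) i i' := by
        simp [hcolU, dotProduct, Matrix.mul_apply]
      rw [h1, hUtU]
    have hXcol : ∀ i, (X *ᵥ colU i) ⬝ᵥ (X *ᵥ colU i) = hX.eigenvalues i := by
      intro i
      rw [dot_mulVec_mulVec, col_eigen _ U _ hUtU hXspec i]
      have h1 : colU i ⬝ᵥ (hX.eigenvalues i • colU i)
          = hX.eigenvalues i * (colU i ⬝ᵥ colU i) := by
        simp only [dotProduct, Pi.smul_apply, smul_eq_mul, Finset.mul_sum]
        apply Finset.sum_congr rfl; intros; ring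
      rw [h1, hcol_dot i i, Matrix.one_apply_eq, mul_one]
    have hGcol : ∀ i, (G *ᵥ colU i) ⬝ᵥ (G *ᵥ colU i)
        = ∑ j, hG.eigenvalues j * ((Vᵀ *ᵥ colU i) j)^2 := by
      intro i
      rw [dot_mulVec_mulVec, quad_form_eq _ V _ hGspec]
    have hcnorm : ∀ i, ∑ j, ((Vᵀ *ᵥ colU i) j)^2 = 1 := by
      intro i
      rw [coords_norm V hV, hcol_dot i i, Matrix.one_apply_eq]
    have hGcol_le : ∀ i, (G *ᵥ colU i) ⬝ᵥ (G *ᵥ colU i) ≤ σ^2 := by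
      intro i
      rw [hGcol i, hσ2]
      calc ∑ j, hG.eigenvalues j * ((Vᵀ *ᵥ colU i) j)^2
          ≤ ∑ j, hG.eigenvalues j0 * ((Vᵀ *ᵥ colU i) j)^2 :=
            Finset.sum_le_sum fun j _ =>
              mul_le_mul_of_nonneg_right (hν_le j) (sq_nonneg _)
        _ = hG.eigenvalues j0 := by rw [← Finset.mul_sum, hcnorm i, mul_one]
    have h_ti_ge2 : ∀ i, -(Real.sqrt ((G *ᵥ colU i) ⬝ᵥ (G *ᵥ colU i))
        * Real.sqrt (hX.eigenvalues i)) ≤ (G *ᵥ colU i) ⬝ᵥ (X *ᵥ colU i) := by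
      intro i
      have h1 := neg_sqrt_mul_sqrt_le_dot (G *ᵥ colU i) (X *ᵥ colU i)
      rw [hXcol i] at h1
      exact h1
    have h_ti_ge : ∀ i, -(σ * Real.sqrt (hX.eigenvalues i))
        ≤ (G *ᵥ colU i) ⬝ᵥ (X *ᵥ colU i) := by
      intro i
      refine le_trans ?_ (h_ti_ge2 i)
      have h1 : Real.sqrt ((G *ᵥ colU i) ⬝ᵥ (G *ᵥ colU i)) ≤ σ := by
        have h2 := Real.sqrt_le_sqrt (hGcol_le i)
        rwa [Real.sqrt_sq hσnn] at h2
      have h2 : 0 ≤ Real.sqrt (hX.eigenvalues i) := Real.sqrt_nonneg _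
      nlinarith [Real.sqrt_nonneg ((G *ᵥ colU i) ⬝ᵥ (G *ᵥ colU i))]
    have hsum_t : ∑ i, (G *ᵥ colU i) ⬝ᵥ (X *ᵥ colU i) = frobInner G X := by
      rw [frobInner_eq_sum_cols G X U hU]
    have htrX : traceNorm X = ∑ i, Real.sqrt (hX.eigenvalues i) := traceNorm_eq_sum_sqrt X
    have hGXeq : frobInner G X = -σ := by
      have hle : frobInner G X ≤ -σ := by
        have h := hlin Z0 hZtr
        rw [hZval] at h
        exact h
      have hge : -(σ * traceNorm X) ≤ frobInner G X := by
        rw [← hsum_t, htrX]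
        have h1 : -(σ * ∑ i, Real.sqrt (hX.eigenvalues i))
            = ∑ i, -(σ * Real.sqrt (hX.eigenvalues i)) := by
          rw [Finset.mul_sum]
          simp
        rw [h1]
        exact Finset.sum_le_sum fun i _ => h_ti_ge i
      have htn := traceNorm_nonneg' X
      nlinarith
    have hterm : ∀ i, (G *ᵥ colU i) ⬝ᵥ (X *ᵥ colU i)
        = -(σ * Real.sqrt (hX.eigenvalues i)) := by
      have hsum0 : ∑ i, ((G *ᵥ colU i) ⬝ᵥ (X *ᵥ colU i)
          + σ * Real.sqrt (hX.eigenvalues i)) ≤ 0 := by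
        rw [Finset.sum_add_distrib, hsum_t, ← Finset.mul_sum, ← htrX, hGXeq]
        nlinarith
      have hnn : ∀ i ∈ Finset.univ, (0:ℝ) ≤ (G *ᵥ colU i) ⬝ᵥ (X *ᵥ colU i)
          + σ * Real.sqrt (hX.eigenvalues i) := fun i _ => by linarith [h_ti_ge i]
      have hz := le_antisymm hsum0 (Finset.sum_nonneg hnn)
      intro i
      have h4 := (Finset.sum_eq_zero_iff_of_nonneg hnn).mp hz i (Finset.mem_univ i)
      linarith
    have hcoord : ∀ i : Fin n, hX.eigenvalues i ≠ 0 → ∀ j,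
        hG.eigenvalues j ≠ hG.eigenvalues j0 → (Vᵀ *ᵥ colU i) j = 0 := by
      intro i hi j hj
      have hμpos : 0 < hX.eigenvalues i := lt_of_le_of_ne (hμnn i) (Ne.symm hi)
      have hsμpos : 0 < Real.sqrt (hX.eigenvalues i) := Real.sqrt_pos.mpr hμpos
      have hGGnn : 0 ≤ (G *ᵥ colU i) ⬝ᵥ (G *ᵥ colU i) := dot_self_nonneg' _
      have hGge : σ ≤ Real.sqrt ((G *ᵥ colU i) ⬝ᵥ (G *ᵥ colU i)) := by
        have h1 := h_ti_ge2 i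
        rw [hterm i] at h1
        have h2 : σ * Real.sqrt (hX.eigenvalues i)
            ≤ Real.sqrt ((G *ᵥ colU i) ⬝ᵥ (G *ᵥ colU i)) * Real.sqrt (hX.eigenvalues i) := by
          linarith
        exact le_of_mul_le_mul_right h2 hsμpos
      have hGsq : σ^2 ≤ (G *ᵥ colU i) ⬝ᵥ (G *ᵥ colU i) := by
        have h3 := mul_le_mul hGge hGge hσnn (Real.sqrt_nonneg _)
        rw [Real.mul_self_sqrt hGGnn] at h3
        rw [pow_two]
        exact h3
      have hGG : (G *ᵥ colU i) ⬝ᵥ (G *ᵥ colU i) = hG.eigenvalues j0 := by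
        have := hGcol_le i
        rw [hσ2] at this hGsq
        linarith
      have hzero : ∑ j', (hG.eigenvalues j0 - hG.eigenvalues j')
          * ((Vᵀ *ᵥ colU i) j')^2 = 0 := by
        calc ∑ j', (hG.eigenvalues j0 - hG.eigenvalues j') * ((Vᵀ *ᵥ colU i) j')^2
            = ∑ j', (hG.eigenvalues j0 * ((Vᵀ *ᵥ colU i) j')^2
              - hG.eigenvalues j' * ((Vᵀ *ᵥ colU i) j')^2) := by
              apply Finset.sum_congr rfl; intros; ring
          _ = hG.eigenvalues j0 * (∑ j', ((Vᵀ *ᵥ colU i) j')^2)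
              - ∑ j', hG.eigenvalues j' * ((Vᵀ *ᵥ colU i) j')^2 := by
              rw [Finset.sum_sub_distrib, Finset.mul_sum]
          _ = hG.eigenvalues j0 * 1 - (G *ᵥ colU i) ⬝ᵥ (G *ᵥ colU i) := by
              rw [hcnorm i, ← hGcol i]
          _ = 0 := by rw [hGG]; ring
      have hnn2 : ∀ j' ∈ Finset.univ, (0:ℝ) ≤ (hG.eigenvalues j0 - hG.eigenvalues j')
          * ((Vᵀ *ᵥ colU i) j')^2 := fun j' _ =>
        mul_nonneg (by linarith [hν_le j']) (sq_nonneg _)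
      have heach := (Finset.sum_eq_zero_iff_of_nonneg hnn2).mp hzero j (Finset.mem_univ j)
      rcases mul_eq_zero.mp heach with h | h
      · exact absurd (sub_eq_zero.mp h).symm hj
      · exact pow_eq_zero_iff (two_ne_zero) |>.mp h
    -- linear independence of coordinate vectors
    set w : {i : Fin n // hX.eigenvalues i ≠ 0}
        → ({j : Fin n // hG.eigenvalues j = hG.eigenvalues j0} → ℝ) :=
      fun i => fun j => (Vᵀ *ᵥ colU i.val) j.val with hw
    have hcdot : ∀ i i' : Fin n, (Vᵀ *ᵥ colU i) ⬝ᵥ (Vᵀ *ᵥ colU i')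
        = (1 : Matrix (Fin n) (Fin n) ℝ) i i' := by
      intro i i'
      rw [dot_mulVec_mulVec, Matrix.transpose_transpose, hV, Matrix.one_mulVec]
      exact hcol_dot i i'
    have hsub_sum : ∀ (i i' : Fin n), hX.eigenvalues i ≠ 0 → hX.eigenvalues i' ≠ 0 →
        ∑ τ : {j : Fin n // hG.eigenvalues j = hG.eigenvalues j0},
          (Vᵀ *ᵥ colU i) τ.val * (Vᵀ *ᵥ colU i') τ.val
        = (1 : Matrix (Fin n) (Fin n) ℝ) i i' := by
      intro i i' hi hi'
      have h1 : ∑ j ∈ Finset.univ.filter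
            (fun j => hG.eigenvalues j = hG.eigenvalues j0),
            (Vᵀ *ᵥ colU i) j * (Vᵀ *ᵥ colU i') j
          = ∑ τ : {j : Fin n // hG.eigenvalues j = hG.eigenvalues j0},
            (Vᵀ *ᵥ colU i) τ.val * (Vᵀ *ᵥ colU i') τ.val :=
        Finset.sum_subtype _ (fun x => by simp only [Finset.mem_filter, Finset.mem_univ, true_and]) _
      rw [← h1, Finset.sum_filter_of_ne, ← dotProduct]
      · exact hcdot i i'
      · intro j _ hne
        by_contra hj
        exact hne (by rw [hcoord i hi j hj, zero_mul])
    have hwli : LinearIndependent ℝ w := by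
      rw [Fintype.linearIndependent_iff]
      intro g hg k
      have happ : ∀ τ, ∑ i, g i * w i τ = 0 := by
        intro τ
        have h5 := congrFun hg τ
        simpa [Finset.sum_apply, hw] using h5
      have hdot : ∑ τ, w k τ * (∑ i, g i * w i τ) = 0 := by
        simp only [happ, mul_zero, Finset.sum_const_zero]
      have hswap : ∑ τ, w k τ * (∑ i, g i * w i τ)
          = ∑ i, g i * (∑ τ, w k τ * w i τ) := by
        calc ∑ τ, w k τ * (∑ i, g i * w i τ)
            = ∑ τ, ∑ i, g i * (w k τ * w i τ) := by
              apply Finset.sum_congr rfl; intro τ _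
              rw [Finset.mul_sum]
              apply Finset.sum_congr rfl; intros; ring
          _ = ∑ i, ∑ τ, g i * (w k τ * w i τ) := Finset.sum_comm
          _ = ∑ i, g i * (∑ τ, w k τ * w i τ) := by
              apply Finset.sum_congr rfl; intro i _
              rw [Finset.mul_sum]
      have hones : ∀ i, ∑ τ, w k τ * w i τ
          = (1 : Matrix (Fin n) (Fin n) ℝ) k.val i.val :=
        fun i => hsub_sum k.val i.val k.2 i.2
      rw [hswap] at hdot
      simp only [hones] at hdot
      have hfin : ∑ i, g i * (1 : Matrix (Fin n) (Fin n) ℝ) k.val i.val = g k := by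
        rw [Finset.sum_eq_single k]
        · rw [Matrix.one_apply_eq, mul_one]
        · intro i _ hik
          rw [Matrix.one_apply_ne (fun hh => hik (Subtype.ext hh.symm)), mul_zero]
        · intro hk
          exact absurd (Finset.mem_univ k) hk
      rw [hfin] at hdot
      exact hdot
    have hcard := hwli.fintype_card_le_finrank
    rw [Module.finrank_pi ℝ] at hcard
    rw [hrank, hmult, Nat.card_eq_fintype_card, Nat.card_eq_fintype_card]
    exact hcard

lemma frobInner_sub_right' {m n : ℕ} (G A B : Matrix (Fin m) (Fin n) ℝ) :
    frobInner G (A - B) = frobInner G A - frobInner G B := by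
  simp [frobInner, Matrix.sub_apply, mul_sub, Finset.sum_sub_distrib]

end helpersAux

/-- For convex differentiable `f`, every minimizer `X*` of `f`
over the unit trace-norm ball satisfies `rank(X*) ≤ #σ₁(∇f(X*))`; moreover, if
`∇f` is nonzero on the set of minimizers, then for any two minimizers `X₁, X₂`,
`rank(X₂) ≤ #σ₁(∇f(X₁))` (i.e. `max rank ≤ min multiplicity`). -/
theorem stmt2 {m n : ℕ} (f : Matrix (Fin m) (Fin n) ℝ → ℝ)
    (gradf : Matrix (Fin m) (Fin n) ℝ → Matrix (Fin m) (Fin n) ℝ)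
    (hconv : ConvexOn ℝ Set.univ f)
    (hdiff : ∀ X, HasFDerivAt f (frobCLM (gradf X)) X) :
    (∀ Xstar, traceNorm Xstar ≤ 1 → (∀ Z, traceNorm Z ≤ 1 → f Xstar ≤ f Z) →
      Xstar.rank ≤ multTop (gradf Xstar)) ∧
    ((∀ Xstar, traceNorm Xstar ≤ 1 → (∀ Z, traceNorm Z ≤ 1 → f Xstar ≤ f Z) →
        gradf Xstar ≠ 0) →
      ∀ X1 X2 : Matrix (Fin m) (Fin n) ℝ,
        traceNorm X1 ≤ 1 → (∀ Z, traceNorm Z ≤ 1 → f X1 ≤ f Z) →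
        traceNorm X2 ≤ 1 → (∀ Z, traceNorm Z ≤ 1 → f X2 ≤ f Z) →
        X2.rank ≤ multTop (gradf X1)) := by
  constructor
  · intro Xstar htr hopt
    apply key_rank_le (gradf Xstar) Xstar htr
    intro Z hZ
    have h := opt_lin f gradf hdiff Xstar htr hopt Z hZ
    rw [frobInner_sub_right'] at h
    linarith
  · intro _ X1 X2 h1tr h1opt h2tr h2opt
    apply key_rank_le (gradf X1) X2 h2tr
    intro Z hZ
    have ha := opt_lin f gradf hdiff X1 h1tr h1opt Z hZ
    rw [frobInner_sub_right'] at ha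
    have hb := grad_ineq f gradf hconv hdiff X1 X2
    rw [frobInner_sub_right'] at hb
    have hfeq : f X2 = f X1 := le_antisymm (h2opt X1 h1tr) (h1opt X2 h2tr)
    linarith
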